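/- Let $\{m_n\}_{n\ge 0}$ be a non-decreasing sequence of positive integers and $W_n \in \mathbb{R}^{m_n \times m_{n-1}}$ satisfy $W_n = I_{m_n,m_{n-1}} + P_n$ with $\sum_{n=1}^\infty \|P_n\|_p < +\infty$. Then for any choice of diagonal $0$-$1$ matrices $J_n \in \mathcal{D}_{m_n}$, the sequence of operators $I_{\infty,m_n} \prod_{i=1}^n J_i W_i$ (viewed as bounded linear operators from $\mathbb{R}^{m_0}$ to $\ell^p$) converges in operator norm as $n \to \infty$. -/

import Mathlib

open scoped ENNReal
open Matrix Filter

noncomputable section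


/-- The `m' × m` matrix with the identity on top and zero rows below. -/
def Ipad (m' m : ℕ) : Matrix (Fin m') (Fin m) ℝ :=
  Matrix.of fun i j => if (i : ℕ) = (j : ℕ) then 1 else 0

/-- The diagonal entries of an activation matrix are 0 or 1. -/
def ZeroOne {m : ℕ} (J : Fin m → ℝ) : Prop := ∀ i, J i = 0 ∨ J i = 1

/-- A matrix viewed as a bounded linear operator between `ℓ^p` spaces `ℝ^a → ℝ^b`. -/
def matCLM (p : ℝ≥0∞) [Fact (1 ≤ p)] {a b : ℕ} (A : Matrix (Fin b) (Fin a) ℝ) :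
    PiLp p (fun _ : Fin a => ℝ) →L[ℝ] PiLp p (fun _ : Fin b => ℝ) :=
  LinearMap.toContinuousLinearMap <|
    (WithLp.linearEquiv p ℝ (Fin b → ℝ)).symm.toLinearMap ∘ₗ
      A.mulVecLin ∘ₗ (WithLp.linearEquiv p ℝ (Fin a → ℝ)).toLinearMap

/-- Zero-padding of a finite vector into `ℓ^p`. -/
def padLp (p : ℝ≥0∞) [Fact (1 ≤ p)] {m : ℕ} (x : Fin m → ℝ) : lp (fun _ : ℕ => ℝ) p :=
  ∑ i : Fin m, lp.single p (i : ℕ) (x i)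

/-- Zero-padding as a bounded linear operator `ℝ^m → ℓ^p`. -/
def padCLM (p : ℝ≥0∞) [Fact (1 ≤ p)] (m : ℕ) :
    PiLp p (fun _ : Fin m => ℝ) →L[ℝ] lp (fun _ : ℕ => ℝ) p :=
  LinearMap.toContinuousLinearMap
    { toFun := fun x => padLp p ((WithLp.linearEquiv p ℝ (Fin m → ℝ)) x)
      map_add' := by
        intro x y
        simp only [padLp, WithLp.linearEquiv_apply]
        rw [← Finset.sum_add_distrib]
        refine Finset.sum_congr rfl fun i _ => ?_
        apply lp.ext
        funext j
        by_cases h : j = (i : ℕ)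
        · subst h
          simp [lp.single_apply_self]
        · simp [lp.single_apply_ne p _ _ h]
      map_smul' := by
        intro c x
        simp only [padLp, WithLp.linearEquiv_apply, RingHom.id_apply, Finset.smul_sum]
        refine Finset.sum_congr rfl fun i _ => ?_
        rw [show (WithLp.addEquiv p (Fin m → ℝ)).toFun (c • x) i = c • (WithLp.addEquiv p (Fin m → ℝ)).toFun x i from rfl,
          lp.single_smul] }


/-- Componentwise ReLU. -/
def relu {m : ℕ} (x : Fin m → ℝ) : Fin m → ℝ := fun i => max (x i) 0

/-- The unit cube `[0,1]^d`. -/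
def cube (d : ℕ) : Set (Fin d → ℝ) := {x | ∀ i, x i ∈ Set.Icc (0:ℝ) 1}

variable {m : ℕ → ℕ}

/-- The deep ReLU network `N_n(x) = σ(W_n · + b_n) ∘ ⋯ ∘ σ(W_1 · + b_1) (x)`. -/
def net (W : ∀ n, Matrix (Fin (m (n+1))) (Fin (m n)) ℝ) (b : ∀ n, Fin (m (n+1)) → ℝ)
    (x : Fin (m 0) → ℝ) : ∀ n, Fin (m n) → ℝ
  | 0 => x
  | n+1 => relu (W n *ᵥ net W b x n + b n)

/-- The product `J_n W_n ⋯ J_1 W_1`. -/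
def prodJW (W : ∀ n, Matrix (Fin (m (n+1))) (Fin (m n)) ℝ)
    (J : ∀ n, Fin (m (n+1)) → ℝ) : ∀ n, Matrix (Fin (m n)) (Fin (m 0)) ℝ
  | 0 => 1
  | n+1 => (Matrix.diagonal (J n) * W n) * prodJW W J n

/-- The product `J_{i+t} W_{i+t} ⋯ J_{i+1} W_{i+1}` (product of `t` factors starting at layer `i+1`). -/
def prodJWFrom (W : ∀ n, Matrix (Fin (m (n+1))) (Fin (m n)) ℝ)
    (J : ∀ n, Fin (m (n+1)) → ℝ) (i : ℕ) : ∀ t, Matrix (Fin (m (i+t))) (Fin (m i)) ℝ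
  | 0 => (1 : Matrix (Fin (m i)) (Fin (m i)) ℝ)
  | t+1 => (Matrix.diagonal (J (i+t)) * W (i+t)) * prodJWFrom W J i t

/-- `∑_{i=1}^n (∏_{k=i+1}^n J_k W_k) J_i b_i`, defined by the recursion
`c_0 = 0`, `c_{n+1} = J_{n+1} W_{n+1} c_n + J_{n+1} b_{n+1}`. -/
def biasSum (W : ∀ n, Matrix (Fin (m (n+1))) (Fin (m n)) ℝ)
    (J : ∀ n, Fin (m (n+1)) → ℝ) (b : ∀ n, Fin (m (n+1)) → ℝ) : ∀ n, Fin (m n) → ℝ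
  | 0 => 0
  | n+1 => (Matrix.diagonal (J n) * W n) *ᵥ biasSum W J b n + Matrix.diagonal (J n) *ᵥ b n

/-- Activation domain of a one-layer network. -/
def actDom {a c : ℕ} (J : Fin c → ℝ) (W : Matrix (Fin c) (Fin a) ℝ) (b : Fin c → ℝ) :
    Set (Fin a → ℝ) :=
  {x | ∀ j, (J j = 1 → 0 < (W *ᵥ x + b) j) ∧ (J j ≠ 1 → (W *ᵥ x + b) j ≤ 0)}

/-- Activation domains of a multi-layer network. -/
def actDomMulti (W : ∀ n, Matrix (Fin (m (n+1))) (Fin (m n)) ℝ)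
    (J : ∀ n, Fin (m (n+1)) → ℝ) (b : ∀ n, Fin (m (n+1)) → ℝ) : ℕ → Set (Fin (m 0) → ℝ)
  | 0 => cube (m 0)
  | n+1 => {x ∈ actDomMulti W J b n | net W b x n ∈ actDom (J n) (W n) (b n)}

/-- The Toeplitz matrix of a filter mask `w = (w_0, …, w_s)`. -/
def toep (s mm : ℕ) (w : Fin (s+1) → ℝ) : Matrix (Fin (mm + s)) (Fin mm) ℝ :=
  Matrix.of fun i j =>
    if h : (j : ℕ) ≤ (i : ℕ) ∧ (i : ℕ) - (j : ℕ) ≤ s then w ⟨(i : ℕ) - (j : ℕ), by omega⟩ else 0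

/-- The widths of a CNN: `m_0 = d`, `m_n = m_{n-1} + s_n`. -/
def cnnWidth (d : ℕ) (s : ℕ → ℕ) : ℕ → ℕ
  | 0 => d
  | n+1 => cnnWidth d s n + s n

/-- The CNN: layer `n+1` maps `x ↦ σ(x * w^{(n+1)} + b_{n+1})`. -/
def cnnNet (d : ℕ) (s : ℕ → ℕ) (w : ∀ n, Fin (s n + 1) → ℝ)
    (b : ∀ n, Fin (cnnWidth d s (n+1)) → ℝ) (x : Fin d → ℝ) :
    ∀ n, Fin (cnnWidth d s n) → ℝ
  | 0 => x
  | n+1 => relu (fun i => (toep (s n) (cnnWidth d s n) (w n) *ᵥ cnnNet d s w b x n) i + b n i)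


/-! ### auxiliary lemmas -/


section Aux

variable (p : ℝ≥0∞) [Fact (1 ≤ p)]

lemma ptoReal_pos (hp : p ≠ ∞) : 0 < p.toReal :=
  ENNReal.toReal_pos (by have := (Fact.out : 1 ≤ p); intro h0; simp [h0] at this) hp

lemma matCLM_apply {a b : ℕ} (A : Matrix (Fin b) (Fin a) ℝ)
    (x : PiLp p (fun _ : Fin a => ℝ)) (i : Fin b) :
    matCLM p A x i = (A *ᵥ (x : Fin a → ℝ)) i := rfl

lemma matCLM_comp {a b c : ℕ} (A : Matrix (Fin c) (Fin b) ℝ) (B : Matrix (Fin b) (Fin a) ℝ) :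
    matCLM p (A * B) = (matCLM p A).comp (matCLM p B) := by
  ext x i
  simp only [matCLM_apply, ← Matrix.mulVec_mulVec, ContinuousLinearMap.comp_apply]
  rfl

lemma matCLM_add {a b : ℕ} (A B : Matrix (Fin b) (Fin a) ℝ) :
    matCLM p (A + B) = matCLM p A + matCLM p B := by
  ext x i
  simp only [matCLM_apply, Matrix.add_mulVec, ContinuousLinearMap.add_apply, Pi.add_apply]
  rfl

lemma matCLM_one {a : ℕ} : matCLM p (1 : Matrix (Fin a) (Fin a) ℝ)
    = ContinuousLinearMap.id ℝ (PiLp p (fun _ : Fin a => ℝ)) := by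
  ext x i
  simp only [matCLM_apply, Matrix.one_mulVec]
  rfl

lemma pinorm_mono {ι : Type*} [Fintype ι] (f g : PiLp p (fun _ : ι => ℝ))
    (h : ∀ i, |f i| ≤ |g i|) : ‖f‖ ≤ ‖g‖ := by
  rcases eq_or_ne p ∞ with hp | hp
  · subst hp
    rw [PiLp.norm_eq_ciSup, PiLp.norm_eq_ciSup]
    rcases isEmpty_or_nonempty ι with hι | hι
    · simp
    refine ciSup_le fun i => le_trans ?_
      (le_ciSup (f := fun i => ‖g i‖) (Set.Finite.bddAbove (Set.finite_range _)) i)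
    simpa [Real.norm_eq_abs] using h i
  · have hp0 := ptoReal_pos p hp
    rw [PiLp.norm_eq_sum hp0, PiLp.norm_eq_sum hp0]
    apply Real.rpow_le_rpow (by positivity) ?_ (by positivity)
    apply Finset.sum_le_sum
    intro i _
    exact Real.rpow_le_rpow (norm_nonneg _) (by simpa [Real.norm_eq_abs] using h i) hp0.le

lemma sum_ite_val {a : ℕ} {M : Type*} [AddCommMonoid M] (i : ℕ) (c : Fin a → M) :
    ∑ k : Fin a, (if i = (k : ℕ) then c k else 0) = if h : i < a then c ⟨i, h⟩ else 0 := by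
  by_cases h : i < a
  · rw [dif_pos h]
    rw [Finset.sum_eq_single (⟨i, h⟩ : Fin a)]
    · simp
    · intro k _ hk
      rw [if_neg]
      intro he
      exact hk (by ext; simp [← he])
    · simp
  · rw [dif_neg h]
    apply Finset.sum_eq_zero
    intro k _
    rw [if_neg]
    intro he
    exact h (he ▸ k.isLt)

lemma Ipad_mulVec {a b : ℕ} (x : Fin a → ℝ) (i : Fin b) :
    (Ipad b a *ᵥ x) i = if h : (i : ℕ) < a then x ⟨i, h⟩ else 0 := by
  rw [Matrix.mulVec, dotProduct, ← sum_ite_val (i : ℕ) x]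
  refine Finset.sum_congr rfl fun j _ => ?_
  simp only [Ipad, Matrix.of_apply]
  by_cases h : (i : ℕ) = (j : ℕ) <;> simp [h]

lemma norm_pad_vec_le {a b : ℕ} (hab : a ≤ b) (x : PiLp p (fun _ : Fin a => ℝ))
    (v : PiLp p (fun _ : Fin b => ℝ)) (hv : ∀ i, v i = if h : (i : ℕ) < a then x ⟨i, h⟩ else 0) :
    ‖v‖ ≤ ‖x‖ := by
  rcases eq_or_ne p ∞ with hp | hp
  · subst hp
    rcases isEmpty_or_nonempty (Fin b) with hb | hb
    · rw [Subsingleton.elim v 0, norm_zero]; exact norm_nonneg x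
    rw [PiLp.norm_eq_ciSup]
    refine ciSup_le fun i => ?_
    rw [hv]
    by_cases h : (i : ℕ) < a
    · rw [dif_pos h, PiLp.norm_eq_ciSup]
      exact le_ciSup (f := fun j : Fin a => ‖x j‖)
        (Set.Finite.bddAbove (Set.finite_range _)) (⟨(i : ℕ), h⟩ : Fin a)
    · rw [dif_neg h, norm_zero]; exact norm_nonneg x
  · have hp0 := ptoReal_pos p hp
    rw [PiLp.norm_eq_sum hp0, PiLp.norm_eq_sum hp0]
    apply Real.rpow_le_rpow (by positivity) (le_of_eq ?_) (by positivity)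
    have key : ∀ i : Fin b, ‖v i‖ ^ p.toReal
        = if h : (i : ℕ) < a then ‖x ⟨(i : ℕ), h⟩‖ ^ p.toReal else 0 := by
      intro i
      rw [hv]
      by_cases h : (i : ℕ) < a
      · rw [dif_pos h, dif_pos h]
      · rw [dif_neg h, dif_neg h, norm_zero, Real.zero_rpow hp0.ne']
    calc ∑ i : Fin b, ‖v i‖ ^ p.toReal
        = ∑ i ∈ Finset.range b, (fun n => if h : n < a then ‖x ⟨n, h⟩‖ ^ p.toReal else 0) i := by
          rw [← Fin.sum_univ_eq_sum_range]
          exact Finset.sum_congr rfl fun i _ => key i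
      _ = ∑ i ∈ Finset.range a, (fun n => if h : n < a then ‖x ⟨n, h⟩‖ ^ p.toReal else 0) i := by
          refine (Finset.sum_subset (Finset.range_subset_range.2 hab) fun i _ hi => ?_).symm
          rw [dif_neg (by simpa using hi)]
      _ = ∑ i : Fin a, ‖x i‖ ^ p.toReal := by
          rw [← Fin.sum_univ_eq_sum_range]
          exact Finset.sum_congr rfl fun i _ => by simp

lemma norm_matCLM_Ipad_le {a b : ℕ} (hab : a ≤ b) : ‖matCLM p (Ipad b a)‖ ≤ 1 := by
  refine ContinuousLinearMap.opNorm_le_bound _ zero_le_one fun x => ?_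
  rw [one_mul]
  exact norm_pad_vec_le p hab x _ (fun i => by rw [matCLM_apply, Ipad_mulVec])

lemma diag_mul_mulVec {a b : ℕ} (d : Fin b → ℝ) (A : Matrix (Fin b) (Fin a) ℝ)
    (x : Fin a → ℝ) (i : Fin b) :
    ((Matrix.diagonal d * A) *ᵥ x) i = d i * (A *ᵥ x) i := by
  rw [Matrix.mulVec, Matrix.mulVec, dotProduct, dotProduct, Finset.mul_sum]
  refine Finset.sum_congr rfl fun j _ => ?_
  rw [Matrix.diagonal_mul, mul_assoc]

lemma norm_matCLM_diag_mul_le {a b : ℕ} (d : Fin b → ℝ) (hd : ∀ i, |d i| ≤ 1)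
    (A : Matrix (Fin b) (Fin a) ℝ) :
    ‖matCLM p (Matrix.diagonal d * A)‖ ≤ ‖matCLM p A‖ := by
  refine ContinuousLinearMap.opNorm_le_bound _ (norm_nonneg _) fun x => ?_
  refine le_trans (le_trans (pinorm_mono p _ (matCLM p A x) fun i => ?_)
    ((matCLM p A).le_opNorm x)) le_rfl
  rw [matCLM_apply, matCLM_apply, diag_mul_mulVec, abs_mul]
  exact mul_le_of_le_one_left (abs_nonneg _) (hd i)

end Aux

section Pad

variable (p : ℝ≥0∞) [Fact (1 ≤ p)]

lemma padLp_coord {a : ℕ} (x : Fin a → ℝ) (j : ℕ) :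
    (padLp p x : ∀ _ : ℕ, ℝ) j = if h : j < a then x ⟨j, h⟩ else 0 := by
  have hc := lp.coeFn_sum (E := fun _ : ℕ => ℝ) (p := p) (fun i : Fin a => lp.single p (i : ℕ) (x i)) Finset.univ
  have hterm : ∀ k : Fin a, (lp.single p (k : ℕ) (x k) : ∀ _ : ℕ, ℝ) j
      = if j = (k : ℕ) then x k else 0 := by
    intro k
    by_cases h : j = (k : ℕ)
    · rw [if_pos h, h, lp.single_apply_self]
    · rw [if_neg h, lp.single_apply_ne p _ _ h]
  rw [padLp, hc, Finset.sum_apply]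
  simp only [hterm]
  exact sum_ite_val j x

lemma padCLM_apply {a : ℕ} (x : PiLp p (fun _ : Fin a => ℝ)) :
    padCLM p a x = padLp p (x : Fin a → ℝ) := rfl

lemma norm_padCLM_le {a : ℕ} : ‖padCLM p a‖ ≤ 1 := by
  refine ContinuousLinearMap.opNorm_le_bound _ zero_le_one fun x => ?_
  rw [one_mul, padCLM_apply]
  rcases eq_or_ne p ∞ with hp | hp
  · subst hp
    rw [lp.norm_eq_ciSup]
    refine ciSup_le fun j => ?_
    rw [padLp_coord]
    by_cases h : j < a
    · rw [dif_pos h, PiLp.norm_eq_ciSup]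
      rcases isEmpty_or_nonempty (Fin a) with _ | _
      · exact absurd h (by simpa using (by simpa using ‹IsEmpty (Fin a)›.false ⟨j, h⟩))
      exact le_ciSup (f := fun i : Fin a => ‖x i‖)
        (Set.Finite.bddAbove (Set.finite_range _)) ⟨j, h⟩
    · rw [dif_neg h, norm_zero]; exact norm_nonneg x
  · have hp0 := ptoReal_pos p hp
    rw [lp.norm_eq_tsum_rpow hp0, PiLp.norm_eq_sum hp0]
    apply Real.rpow_le_rpow ?_ (le_of_eq ?_) (by positivity)
    · exact tsum_nonneg fun j => Real.rpow_nonneg (norm_nonneg _) _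
    calc (∑' j : ℕ, ‖(padLp p (x : Fin a → ℝ) : ∀ _ : ℕ, ℝ) j‖ ^ p.toReal)
        = ∑ j ∈ Finset.range a, ‖(padLp p (x : Fin a → ℝ) : ∀ _ : ℕ, ℝ) j‖ ^ p.toReal := by
          refine tsum_eq_sum fun j hj => ?_
          rw [padLp_coord, dif_neg (by simpa using hj), norm_zero, Real.zero_rpow hp0.ne']
      _ = ∑ j ∈ Finset.range a,
            (fun n => if h : n < a then ‖x ⟨n, h⟩‖ ^ p.toReal else 0) j := by
          refine Finset.sum_congr rfl fun j hj => ?_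
          have h : j < a := by simpa using hj
          simp only [padLp_coord, dif_pos h]
      _ = ∑ i : Fin a, ‖x i‖ ^ p.toReal := by
          rw [← Fin.sum_univ_eq_sum_range]
          exact Finset.sum_congr rfl fun i _ => by simp

lemma pad_comp_mat_coord {a b : ℕ} (M : Matrix (Fin b) (Fin a) ℝ)
    (x : PiLp p (fun _ : Fin a => ℝ)) (j : ℕ) :
    (((padCLM p b).comp (matCLM p M)) x : ∀ _ : ℕ, ℝ) j
      = if h : j < b then (M *ᵥ (x : Fin a → ℝ)) ⟨j, h⟩ else 0 := by
  rw [ContinuousLinearMap.comp_apply, padCLM_apply, padLp_coord]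
  exact dite_congr rfl (fun _ => rfl) fun _ => rfl

lemma pad_comp_mat_eq {a b b' : ℕ} (M : Matrix (Fin b) (Fin a) ℝ)
    (M' : Matrix (Fin b') (Fin a) ℝ)
    (h : ∀ (i : ℕ) (j : Fin a),
      (if hb : i < b then M ⟨i, hb⟩ j else 0) = (if hb : i < b' then M' ⟨i, hb⟩ j else 0)) :
    (padCLM p b).comp (matCLM p M) = (padCLM p b').comp (matCLM p M') := by
  refine ContinuousLinearMap.ext fun x => lp.ext (funext fun j => ?_)
  rw [pad_comp_mat_coord, pad_comp_mat_coord]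
  have key : ∀ {c : ℕ} (N : Matrix (Fin c) (Fin a) ℝ),
      (if hb : j < c then (N *ᵥ (x : Fin a → ℝ)) ⟨j, hb⟩ else 0)
        = ∑ k : Fin a, (if hb : j < c then N ⟨j, hb⟩ k else 0) * x k := by
    intro c N
    by_cases hb : j < c
    · simp only [dif_pos hb]; rfl
    · simp only [dif_neg hb, zero_mul, Finset.sum_const_zero]
  rw [key M, key M']
  exact Finset.sum_congr rfl fun k _ => by rw [h j k]

end Pad

section Prod

variable (p : ℝ≥0∞) [Fact (1 ≤ p)] {m : ℕ → ℕ}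

/-- W made of pure `Ipad`s. -/
def IW (m : ℕ → ℕ) : ∀ n, Matrix (Fin (m (n+1))) (Fin (m n)) ℝ :=
  fun k => Ipad (m (k+1)) (m k)

def Jext (m : ℕ → ℕ) (J : ∀ n, Fin (m (n+1)) → ℝ) (k i : ℕ) : ℝ :=
  if h : i < m (k+1) then J k ⟨i, h⟩ else 0

def qfun (m : ℕ → ℕ) (J : ∀ n, Fin (m (n+1)) → ℝ) (n t i : ℕ) : ℝ :=
  ∏ k ∈ Finset.range t, Jext m J (n+k) i

lemma Jext_mem (J : ∀ n, Fin (m (n+1)) → ℝ) (hJ : ∀ n, ZeroOne (J n)) (k i : ℕ) :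
    Jext m J k i = 0 ∨ Jext m J k i = 1 := by
  unfold Jext
  by_cases h : i < m (k+1)
  · rw [dif_pos h]; exact hJ k _
  · rw [dif_neg h]; exact Or.inl rfl

lemma qfun_mem (J : ∀ n, Fin (m (n+1)) → ℝ) (hJ : ∀ n, ZeroOne (J n)) (n t i : ℕ) :
    qfun m J n t i = 0 ∨ qfun m J n t i = 1 := by
  induction t with
  | zero => exact Or.inr (by simp [qfun])
  | succ t ih =>
    rw [qfun, Finset.prod_range_succ]
    rcases ih with h | h <;> rcases Jext_mem J hJ (n+t) i with h' | h' <;>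
      simp [qfun] at h ⊢ <;> simp [h, h']

lemma qfun_succ (J : ∀ n, Fin (m (n+1)) → ℝ) (n t i : ℕ) :
    qfun m J n (t+1) i = qfun m J n t i * Jext m J (n+t) i := by
  rw [qfun, Finset.prod_range_succ]; rfl

lemma qfun_zero_propagate (J : ∀ n, Fin (m (n+1)) → ℝ) (n t t' i : ℕ) (h : t ≤ t')
    (h0 : qfun m J n t i = 0) : qfun m J n t' i = 0 := by
  obtain ⟨k, rfl⟩ := Nat.exists_eq_add_of_le h
  rw [qfun, Finset.prod_range_add]
  rw [qfun] at h0
  rw [h0, zero_mul]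

/-- stabilization of `qfun` -/
lemma qfun_stab (J : ∀ n, Fin (m (n+1)) → ℝ) (hJ : ∀ n, ZeroOne (J n)) (n : ℕ) :
    ∃ T, ∀ t, T ≤ t → ∀ i, i < m n → qfun m J n t i = qfun m J n T i := by
  have per : ∀ i : ℕ, ∃ T, ∀ t, T ≤ t → qfun m J n t i = qfun m J n T i := by
    intro i
    by_cases h : ∃ t, qfun m J n t i = 0
    · obtain ⟨t0, h0⟩ := h
      exact ⟨t0, fun t ht => by rw [qfun_zero_propagate J n t0 t i ht h0, h0]⟩
    · push_neg at h
      have h1 : ∀ s, qfun m J n s i = 1 :=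
        fun s => (qfun_mem J hJ n s i).resolve_left (h s)
      exact ⟨0, fun t _ => by rw [h1, h1]⟩
  choose T hT using per
  refine ⟨(Finset.range (m n)).sup T, fun t ht i hi => ?_⟩
  have hTi : T i ≤ (Finset.range (m n)).sup T := Finset.le_sup (Finset.mem_range.2 hi)
  rw [hT i t (le_trans hTi ht), hT i _ hTi]

end Prod

section Pure

variable (p : ℝ≥0∞) [Fact (1 ≤ p)] {m : ℕ → ℕ}

lemma pure_entry (J : ∀ n, Fin (m (n+1)) → ℝ) (hmono : ∀ n, m n ≤ m (n+1))
    (n t : ℕ) (i : Fin (m (n+t))) (j : Fin (m n)) :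
    prodJWFrom (IW m) J n t i j
      = if (i : ℕ) = (j : ℕ) then qfun m J n t (j : ℕ) else 0 := by
  have mono : Monotone m := monotone_nat_of_le_succ hmono
  induction t with
  | zero =>
    change (1 : Matrix (Fin (m n)) (Fin (m n)) ℝ) i j = _
    rw [Matrix.one_apply]
    simp only [qfun, Finset.range_zero, Finset.prod_empty]
    congr 1
    simp [Fin.ext_iff]
  | succ t ih =>
    rw [show prodJWFrom (IW m) J n (t+1)
        = (Matrix.diagonal (J (n+t)) * IW m (n+t)) * prodJWFrom (IW m) J n t from rfl]
    rw [Matrix.mul_apply]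
    have hterm : ∀ k : Fin (m (n+t)),
        (Matrix.diagonal (J (n+t)) * IW m (n+t)) i k * prodJWFrom (IW m) J n t k j
          = if (i : ℕ) = (k : ℕ) then
              J (n+t) i * (if (k : ℕ) = (j : ℕ) then qfun m J n t (j : ℕ) else 0) else 0 := by
      intro k
      rw [Matrix.diagonal_mul, ih]
      show J (n+t) i * Ipad (m (n+t+1)) (m (n+t)) i k * _ = _
      simp only [Ipad, Matrix.of_apply]
      by_cases h : (i : ℕ) = (k : ℕ) <;> simp [h]
    rw [Finset.sum_congr rfl fun k _ => hterm k, sum_ite_val]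
    by_cases hij : (i : ℕ) = (j : ℕ)
    · rw [if_pos hij]
      have hj : (j : ℕ) < m (n+t) := lt_of_lt_of_le j.isLt (mono (Nat.le_add_right n t))
      have hi : (i : ℕ) < m (n+t) := hij ▸ hj
      rw [dif_pos hi]
      rw [if_pos (by simpa using hij)]
      rw [qfun_succ]
      have hJe : Jext m J (n+t) (j : ℕ) = J (n+t) i := by
        rw [Jext, dif_pos (show (j : ℕ) < m (n+t+1) from i.isLt.trans_le' (le_of_eq hij.symm) |>.trans_le le_rfl)]
        congr 1
        exact Fin.ext hij.symm
      rw [hJe]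
      ring
    · rw [if_neg hij]
      by_cases hi : (i : ℕ) < m (n+t)
      · rw [dif_pos hi, if_neg (by simpa using hij), mul_zero]
      · rw [dif_neg hi]

lemma pureMul_entry (J : ∀ n, Fin (m (n+1)) → ℝ) (hmono : ∀ n, m n ≤ m (n+1))
    (n t : ℕ) (A : Matrix (Fin (m n)) (Fin (m 0)) ℝ) (i : Fin (m (n+t))) (j : Fin (m 0)) :
    (prodJWFrom (IW m) J n t * A) i j
      = if h : (i : ℕ) < m n then qfun m J n t (i : ℕ) * A ⟨(i : ℕ), h⟩ j else 0 := by
  rw [Matrix.mul_apply]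
  have hterm : ∀ k : Fin (m n), prodJWFrom (IW m) J n t i k * A k j
      = if (i : ℕ) = (k : ℕ) then qfun m J n t (k : ℕ) * A k j else 0 := by
    intro k
    rw [pure_entry J hmono]
    by_cases h : (i : ℕ) = (k : ℕ) <;> simp [h]
  rw [Finset.sum_congr rfl fun k _ => hterm k, sum_ite_val]

lemma prodJW_split (W : ∀ n, Matrix (Fin (m (n+1))) (Fin (m n)) ℝ)
    (J : ∀ n, Fin (m (n+1)) → ℝ) (n t : ℕ) :
    prodJW W J (n + t) = prodJWFrom W J n t * prodJW W J n := by
  induction t with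
  | zero =>
    change prodJW W J n = _
    change _ = (1 : Matrix (Fin (m n)) (Fin (m n)) ℝ) * prodJW W J n
    rw [Matrix.one_mul]
  | succ t ih =>
    show (Matrix.diagonal (J (n+t)) * W (n+t)) * prodJW W J (n+t) = _
    rw [ih, ← Matrix.mul_assoc]
    rfl

end Pure

section Bounds

variable (p : ℝ≥0∞) [Fact (1 ≤ p)] {m : ℕ → ℕ}

variable (W P : ∀ n, Matrix (Fin (m (n+1))) (Fin (m n)) ℝ)
  (J : ∀ n, Fin (m (n+1)) → ℝ)

lemma absJ (hJ : ∀ n, ZeroOne (J n)) (k : ℕ) (i : Fin (m (k+1))) : |J k i| ≤ 1 := by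
  rcases hJ k i with h | h <;> rw [h] <;> norm_num

lemma DI_norm_le (hmono : ∀ n, m n ≤ m (n+1)) (hJ : ∀ n, ZeroOne (J n)) (k : ℕ) :
    ‖matCLM p (Matrix.diagonal (J k) * IW m k)‖ ≤ 1 :=
  le_trans (norm_matCLM_diag_mul_le p _ (absJ J hJ k) _) (norm_matCLM_Ipad_le p (hmono k))

lemma DW_norm_le (hW : ∀ n, W n = Ipad (m (n+1)) (m n) + P n)
    (hmono : ∀ n, m n ≤ m (n+1)) (hJ : ∀ n, ZeroOne (J n)) (k : ℕ) :
    ‖matCLM p (Matrix.diagonal (J k) * W k)‖ ≤ 1 + ‖matCLM p (P k)‖ := by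
  rw [hW k, Matrix.mul_add, matCLM_add]
  refine le_trans (norm_add_le _ _) (add_le_add ?_ ?_)
  · exact DI_norm_le p J hmono hJ k
  · exact norm_matCLM_diag_mul_le p _ (absJ J hJ k) _

lemma From_bounds (hW : ∀ n, W n = Ipad (m (n+1)) (m n) + P n)
    (hmono : ∀ n, m n ≤ m (n+1)) (hJ : ∀ n, ZeroOne (J n)) (n t : ℕ) :
    ‖matCLM p (prodJWFrom W J n t)‖ ≤ (∏ k ∈ Finset.range t, (1 + ‖matCLM p (P (n+k))‖)) ∧
    ‖matCLM p (prodJWFrom W J n t) - matCLM p (prodJWFrom (IW m) J n t)‖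
      ≤ (∏ k ∈ Finset.range t, (1 + ‖matCLM p (P (n+k))‖)) - 1 := by
  induction t with
  | zero =>
    constructor
    · change ‖matCLM p (1 : Matrix (Fin (m n)) (Fin (m n)) ℝ)‖ ≤ _
      rw [matCLM_one]
      simpa using ContinuousLinearMap.norm_id_le
    · change ‖matCLM p (1 : Matrix (Fin (m n)) (Fin (m n)) ℝ)
        - matCLM p (1 : Matrix (Fin (m n)) (Fin (m n)) ℝ)‖ ≤ _
      rw [sub_self, norm_zero]
      simp
  | succ t ih =>
    obtain ⟨ih1, ih2⟩ := ih
    have hPn : (0:ℝ) ≤ ∏ k ∈ Finset.range t, (1 + ‖matCLM p (P (n+k))‖) :=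
      Finset.prod_nonneg fun k _ => by positivity
    have hsplit : prodJWFrom W J n (t+1)
        = (Matrix.diagonal (J (n+t)) * W (n+t)) * prodJWFrom W J n t := rfl
    have hsplit' : prodJWFrom (IW m) J n (t+1)
        = (Matrix.diagonal (J (n+t)) * IW m (n+t)) * prodJWFrom (IW m) J n t := rfl
    constructor
    · rw [hsplit, matCLM_comp, Finset.prod_range_succ]
      refine le_trans (ContinuousLinearMap.opNorm_comp_le _ _) ?_
      rw [mul_comm (∏ k ∈ Finset.range t, (1 + ‖matCLM p (P (n+k))‖)) _]
      exact mul_le_mul (DW_norm_le p W P J hW hmono hJ (n+t)) ih1 (norm_nonneg _)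
        (add_nonneg zero_le_one (norm_nonneg _))

    · have hD : Matrix.diagonal (J (n+t)) * W (n+t)
          = Matrix.diagonal (J (n+t)) * IW m (n+t) + Matrix.diagonal (J (n+t)) * P (n+t) := by
        rw [hW (n+t), Matrix.mul_add]; rfl
      rw [hsplit, hsplit', hD, Matrix.add_mul, matCLM_add,
        matCLM_comp p (Matrix.diagonal (J (n+t)) * IW m (n+t)) (prodJWFrom W J n t),
        matCLM_comp p (Matrix.diagonal (J (n+t)) * P (n+t)) (prodJWFrom W J n t),
        matCLM_comp p (Matrix.diagonal (J (n+t)) * IW m (n+t)) (prodJWFrom (IW m) J n t)]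
      have heq : (matCLM p (Matrix.diagonal (J (n+t)) * IW m (n+t))).comp
            (matCLM p (prodJWFrom W J n t))
          + (matCLM p (Matrix.diagonal (J (n+t)) * P (n+t))).comp
            (matCLM p (prodJWFrom W J n t))
          - (matCLM p (Matrix.diagonal (J (n+t)) * IW m (n+t))).comp
            (matCLM p (prodJWFrom (IW m) J n t))
          = (matCLM p (Matrix.diagonal (J (n+t)) * IW m (n+t))).comp
              (matCLM p (prodJWFrom W J n t) - matCLM p (prodJWFrom (IW m) J n t))
            + (matCLM p (Matrix.diagonal (J (n+t)) * P (n+t))).comp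
              (matCLM p (prodJWFrom W J n t)) := by
        rw [ContinuousLinearMap.comp_sub]
        abel
      rw [heq]
      refine le_trans (norm_add_le _ _) ?_
      have b1 : ‖(matCLM p (Matrix.diagonal (J (n+t)) * IW m (n+t))).comp
            (matCLM p (prodJWFrom W J n t) - matCLM p (prodJWFrom (IW m) J n t))‖
          ≤ (∏ k ∈ Finset.range t, (1 + ‖matCLM p (P (n+k))‖)) - 1 := by
        refine le_trans (ContinuousLinearMap.opNorm_comp_le _ _) ?_
        refine le_trans (mul_le_mul (DI_norm_le p J hmono hJ (n+t)) ih2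
          (norm_nonneg _) zero_le_one) ?_
        rw [one_mul]
      have b2 : ‖(matCLM p (Matrix.diagonal (J (n+t)) * P (n+t))).comp
            (matCLM p (prodJWFrom W J n t))‖
          ≤ ‖matCLM p (P (n+t))‖ * ∏ k ∈ Finset.range t, (1 + ‖matCLM p (P (n+k))‖) := by
        refine le_trans (ContinuousLinearMap.opNorm_comp_le _ _) ?_
        exact mul_le_mul (norm_matCLM_diag_mul_le p _ (absJ J hJ (n+t)) _) ih1
          (norm_nonneg _) (norm_nonneg _)
      refine le_trans (add_le_add b1 b2) ?_
      rw [Finset.prod_range_succ]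
      ring_nf
      nlinarith [norm_nonneg (matCLM p (P (n+t)))]

lemma prodJW_norm_le (hW : ∀ n, W n = Ipad (m (n+1)) (m n) + P n)
    (hmono : ∀ n, m n ≤ m (n+1)) (hJ : ∀ n, ZeroOne (J n)) (n : ℕ) :
    ‖matCLM p (prodJW W J n)‖ ≤ ∏ k ∈ Finset.range n, (1 + ‖matCLM p (P k)‖) := by
  induction n with
  | zero =>
    rw [show prodJW W J 0 = 1 from rfl, matCLM_one]
    simpa using ContinuousLinearMap.norm_id_le
  | succ n ih =>
    rw [show prodJW W J (n+1) = (Matrix.diagonal (J n) * W n) * prodJW W J n from rfl,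
      matCLM_comp, Finset.prod_range_succ]
    refine le_trans (ContinuousLinearMap.opNorm_comp_le _ _) ?_
    rw [mul_comm (∏ k ∈ Finset.range n, (1 + ‖matCLM p (P k)‖)) _]
    exact mul_le_mul (DW_norm_le p W P J hW hmono hJ n) ih (norm_nonneg _)
      (add_nonneg zero_le_one (norm_nonneg _))

lemma prod_one_add_le_exp (f : ℕ → ℝ) (hf : ∀ k, 0 ≤ f k) (s : Finset ℕ) :
    ∏ k ∈ s, (1 + f k) ≤ Real.exp (∑ k ∈ s, f k) := by
  rw [Real.exp_sum]
  refine Finset.prod_le_prod (fun k _ => add_nonneg zero_le_one (hf k)) fun k _ => ?_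
  rw [add_comm]
  exact Real.add_one_le_exp (f k)

end Bounds


theorem stmt4 (p : ℝ≥0∞) [Fact (1 ≤ p)] (m : ℕ → ℕ) (hpos : ∀ n, 0 < m n)
    (hmono : ∀ n, m n ≤ m (n+1))
    (W P : ∀ n, Matrix (Fin (m (n+1))) (Fin (m n)) ℝ)
    (hW : ∀ n, W n = Ipad (m (n+1)) (m n) + P n)
    (hP : Summable fun n => ‖matCLM p (P n)‖)
    (J : ∀ n, Fin (m (n+1)) → ℝ) (hJ : ∀ n, ZeroOne (J n)) :
    ∃ L : PiLp p (fun _ : Fin (m 0) => ℝ) →L[ℝ] lp (fun _ : ℕ => ℝ) p,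
      Tendsto (fun n => (padCLM p (m n)).comp (matCLM p (prodJW W J n)))
        atTop (nhds L) := by
  classical
  have mono : Monotone m := monotone_nat_of_le_succ hmono
  set ε : ℕ → ℝ := fun k => ‖matCLM p (P k)‖ with hεdef
  have hε0 : ∀ k, 0 ≤ ε k := fun k => norm_nonneg _
  set C : ℝ := Real.exp (∑' k, ε k) with hCdef
  have hC1 : (1:ℝ) ≤ C := Real.one_le_exp (tsum_nonneg hε0)
  have hA : ∀ n, ‖matCLM p (prodJW W J n)‖ ≤ C := by
    intro n
    refine le_trans (prodJW_norm_le p W P J hW hmono hJ n) ?_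
    refine le_trans (prod_one_add_le_exp ε hε0 _) ?_
    exact Real.exp_le_exp.2 (Summable.sum_le_tsum _ (fun k _ => hε0 k) hP)
  set s : ℕ → ℝ := fun n => ∑' k, ε (k + n) with hsdef
  have hs0 : ∀ n, 0 ≤ s n := fun n => tsum_nonneg fun k => hε0 _
  have hPi : ∀ n t, (∏ k ∈ Finset.range t, (1 + ε (n+k))) ≤ Real.exp (s n) := by
    intro n t
    refine le_trans (prod_one_add_le_exp (fun k => ε (n+k)) (fun k => hε0 _) _) ?_
    apply Real.exp_le_exp.2
    have hsum : Summable fun k => ε (k + n) := (summable_nat_add_iff n).2 hP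
    calc ∑ k ∈ Finset.range t, ε (n+k)
        = ∑ k ∈ Finset.range t, ε (k+n) :=
          Finset.sum_congr rfl fun k _ => by rw [add_comm]
      _ ≤ s n := Summable.sum_le_tsum _ (fun k _ => hε0 _) hsum
  have hdev : ∀ n t, ‖(padCLM p (m (n+t))).comp (matCLM p (prodJW W J (n+t)))
      - (padCLM p (m (n+t))).comp
          (matCLM p (prodJWFrom (IW m) J n t * prodJW W J n))‖
      ≤ (Real.exp (s n) - 1) * C := by
    intro n t
    rw [prodJW_split W J n t, ← ContinuousLinearMap.comp_sub,
      matCLM_comp, matCLM_comp, ← ContinuousLinearMap.sub_comp]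
    refine le_trans (ContinuousLinearMap.opNorm_comp_le _ _) ?_
    have h1 : ‖(matCLM p (prodJWFrom W J n t)
          - matCLM p (prodJWFrom (IW m) J n t)).comp (matCLM p (prodJW W J n))‖
        ≤ (Real.exp (s n) - 1) * C := by
      refine le_trans (ContinuousLinearMap.opNorm_comp_le _ _) ?_
      refine mul_le_mul
        (le_trans (From_bounds p W P J hW hmono hJ n t).2 (by linarith [hPi n t]))
        (hA n) (norm_nonneg _) (by linarith [Real.one_le_exp (hs0 n)])
    calc ‖padCLM p (m (n+t))‖ * ‖(matCLM p (prodJWFrom W J n t)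
          - matCLM p (prodJWFrom (IW m) J n t)).comp (matCLM p (prodJW W J n))‖
        ≤ 1 * ((Real.exp (s n) - 1) * C) :=
          mul_le_mul (norm_padCLM_le p) h1 (norm_nonneg _) zero_le_one
      _ = (Real.exp (s n) - 1) * C := one_mul _
  have hcauchy : CauchySeq (fun n => (padCLM p (m n)).comp (matCLM p (prodJW W J n))) := by
    rw [Metric.cauchySeq_iff']
    intro δ hδ
    have hs_to : Tendsto s atTop (nhds 0) := tendsto_sum_nat_add ε
    have h2 : Tendsto (fun n => 2 * ((Real.exp (s n) - 1) * C)) atTop (nhds 0) := by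
      have hexp : Tendsto (fun n => Real.exp (s n)) atTop (nhds 1) := by
        have := (Real.continuous_exp.tendsto 0).comp hs_to
        simpa [Function.comp_def] using this
      have : Tendsto (fun n => 2 * ((Real.exp (s n) - 1) * C)) atTop
          (nhds (2 * ((1 - 1) * C))) :=
        (((hexp.sub tendsto_const_nhds).mul tendsto_const_nhds).const_mul 2)
      simpa using this
    obtain ⟨n₀, hn₀⟩ := (h2.eventually_lt_const hδ).exists
    obtain ⟨T, hT⟩ := qfun_stab J hJ n₀
    refine ⟨n₀ + T, fun n hn => ?_⟩
    set t : ℕ := n - n₀ with htdef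
    have hnt : n = n₀ + t := by omega
    have htT : T ≤ t := by omega
    have hGeq : (padCLM p (m (n₀+t))).comp
          (matCLM p (prodJWFrom (IW m) J n₀ t * prodJW W J n₀))
        = (padCLM p (m (n₀+T))).comp
          (matCLM p (prodJWFrom (IW m) J n₀ T * prodJW W J n₀)) := by
      apply pad_comp_mat_eq
      intro i j
      have key : ∀ t', (if hb : i < m (n₀+t')
            then (prodJWFrom (IW m) J n₀ t' * prodJW W J n₀) ⟨i, hb⟩ j else 0)
          = if h : i < m n₀ then qfun m J n₀ t' i * prodJW W J n₀ ⟨i, h⟩ j else 0 := by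
        intro t'
        by_cases h : i < m n₀
        · have hb : i < m (n₀+t') := lt_of_lt_of_le h (mono (Nat.le_add_right _ _))
          rw [dif_pos hb, pureMul_entry J hmono, dif_pos h]
        · by_cases hb : i < m (n₀+t')
          · rw [dif_pos hb, pureMul_entry J hmono, dif_neg h]
          · rw [dif_neg hb, dif_neg h]
      rw [key t, key T]
      by_cases h : i < m n₀
      · rw [dif_pos h, dif_pos h, hT t htT i h]
      · rw [dif_neg h, dif_neg h]
    rw [dist_eq_norm, hnt]
    have hsplit : (padCLM p (m (n₀+t))).comp (matCLM p (prodJW W J (n₀+t)))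
          - (padCLM p (m (n₀+T))).comp (matCLM p (prodJW W J (n₀+T)))
        = ((padCLM p (m (n₀+t))).comp (matCLM p (prodJW W J (n₀+t)))
            - (padCLM p (m (n₀+t))).comp
              (matCLM p (prodJWFrom (IW m) J n₀ t * prodJW W J n₀)))
          + ((padCLM p (m (n₀+T))).comp
              (matCLM p (prodJWFrom (IW m) J n₀ T * prodJW W J n₀))
            - (padCLM p (m (n₀+T))).comp (matCLM p (prodJW W J (n₀+T)))) := by
      rw [hGeq]
      abel
    rw [hsplit]
    refine lt_of_le_of_lt (le_trans (norm_add_le _ _) ?_) hn₀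
    have hd2 : ‖(padCLM p (m (n₀+T))).comp
          (matCLM p (prodJWFrom (IW m) J n₀ T * prodJW W J n₀))
        - (padCLM p (m (n₀+T))).comp (matCLM p (prodJW W J (n₀+T)))‖
        ≤ (Real.exp (s n₀) - 1) * C := by
      rw [norm_sub_rev]
      exact hdev n₀ T
    have hd1 := hdev n₀ t
    linarith
  obtain ⟨L, hL⟩ := cauchySeq_tendsto_of_complete hcauchy
  exact ⟨L, hL⟩


end
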